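/- Let f: B → W_n(B) be the map making the diagram with F V − V F: W_n(B) → W_n(B) and the n-th truncation T^n: W_n(B) → B commute (such f exists since (FV − VF) ∘ V = 0). Then f has the form f(x) = (π x, c_1 x^{q̂}, c_2 x^{q̂²}, ..., c_n x^{q̂ⁿ}) for some constants c_j ∈ R independent of B. -/

import Mathlib

/-- Lemma (comm): function-field Witt vectors, in coordinates.  Let `B` be a π-torsion-free
`R`-algebra of characteristic `p`, with `q̂ = p^f`.  Witt vectors of length `n+1` are coordinate
vectors, the ghost components being `w_k(x) = Σ_{i≤k} π^i xᵢ^(q̂^(k-i))`; `V` is the explicit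
shift and `F` is any map with the Frobenius ghost property `w_k(F x) = w_{k+1}(x)`.
If `g : B → W_n(B)` makes the diagram with `F V - V F` and the truncation `T^n(x) = x₀`
commute (i.e. `(F V - V F)(x) = g(x₀)` componentwise, subtraction being componentwise in the
function-field setting), then `g` has the form
`g(b) = (π b, c₁ b^q̂, c₂ b^(q̂²), …, cₙ b^(q̂ⁿ))` for constants `cⱼ ∈ R`. -/
theorem stmt10 (R : Type*) [CommRing R] (B : Type*) [CommRing B] [Algebra R B]
    (p : ℕ) (hp : p.Prime) [CharP B p]
    (f : ℕ) (hf : 1 ≤ f) (qh : ℕ) (hqh : qh = p ^ f)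
    (πR : R)
    (htf : ∀ b : B, algebraMap R B πR * b = 0 → b = 0)
    (n : ℕ)
    (F : (ℕ → B) → (ℕ → B))
    (hF : ∀ x : ℕ → B, ∀ k, k ≤ n →
      ∑ i ∈ Finset.range (k + 1), algebraMap R B πR ^ i * (F x i) ^ qh ^ (k - i) =
        ∑ i ∈ Finset.range (k + 2), algebraMap R B πR ^ i * (x i) ^ qh ^ (k + 1 - i))
    (g : B → ℕ → B)
    (hg : ∀ x : ℕ → B, ∀ k, k ≤ n →
      F (fun m => if m = 0 then 0 else x (m - 1)) k
        - (if k = 0 then 0 else F x (k - 1)) = g (x 0) k) :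
    ∃ c : ℕ → R, ∀ b : B,
      g b 0 = algebraMap R B πR * b ∧
      ∀ j, 1 ≤ j → j ≤ n → g b j = algebraMap R B (c j) * b ^ qh ^ j := by
  classical
  haveI : Fact p.Prime := ⟨hp⟩
  have hq2 : 2 ≤ qh := by
    subst hqh
    calc 2 ≤ p := hp.two_le
    _ ≤ p ^ f := Nat.le_self_pow (by omega) p
  have hq0 : ∀ e : ℕ, qh ^ e ≠ 0 := fun e => pow_ne_zero e (by omega)
  have hqk : ∀ m : ℕ, m + 1 ≤ qh ^ m := by
    intro m
    calc m + 1 ≤ 2 ^ m := Nat.lt_two_pow_self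
    _ ≤ qh ^ m := Nat.pow_le_pow_left hq2 m
  have htf' : ∀ (m : ℕ) (b : B), algebraMap R B πR ^ m * b = 0 → b = 0 := by
    intro m
    induction m with
    | zero => intro b h; simpa using h
    | succ m ih =>
      intro b h
      refine htf b (ih (algebraMap R B πR * b) ?_)
      rw [← mul_assoc, ← pow_succ]
      exact h
  have hfrob : ∀ (a c : B) (e : ℕ), (a - c) ^ qh ^ e = a ^ qh ^ e - c ^ qh ^ e := by
    intro a c e
    rw [hqh, ← pow_mul]
    exact sub_pow_char_pow a c (f * e)
  -- g b 0 = π b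
  have hFVx0 : ∀ b : B,
      F (fun m => if m = 0 then 0 else if m - 1 = 0 then b else 0) 0
        = algebraMap R B πR * b := by
    intro b
    have h0 := hF (fun m => if m = 0 then 0 else (fun j => if j = 0 then b else 0) (m - 1)) 0
      (Nat.zero_le n)
    simp only [Finset.sum_range_succ, Finset.sum_range_zero, pow_zero, pow_one, one_mul,
      zero_add, Nat.sub_zero, Nat.sub_self] at h0
    norm_num at h0
    rw [zero_pow (show qh ≠ 0 by omega), zero_add] at h0
    exact h0
  have hg0 : ∀ b : B, g b 0 = algebraMap R B πR * b := by
    intro b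
    have h1 := hg (fun j => if j = 0 then b else 0) 0 (Nat.zero_le n)
    rw [if_pos rfl, sub_zero] at h1
    simp only at h1
    rw [hFVx0 b] at h1
    simpa using h1.symm
  have hstar : ∀ (m : ℕ), m + 1 ≤ n → ∀ b : B,
      (∑ i ∈ Finset.range (m+1),
        algebraMap R B πR ^ (i+1) * (g b (i+1)) ^ qh ^ (m - i))
        + (algebraMap R B πR * b) ^ qh ^ (m+1) = 0 := by
    intro m hm b
    have hE1 := hF (fun j => if j = 0 then 0 else if j - 1 = 0 then b else 0) (m+1) hm
    have hE2 := hF (fun j => if j = 0 then b else 0) m (by omega)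
    have hR1 : ∑ i ∈ Finset.range (m + 1 + 2),
        algebraMap R B πR ^ i *
          ((fun j => if j = 0 then 0 else if j - 1 = 0 then b else 0) i) ^ qh ^ (m + 1 + 1 - i)
        = algebraMap R B πR * b ^ qh ^ (m+1) := by
      rw [Finset.sum_eq_single 1]
      · norm_num
      · intro i hi hne
        rcases Nat.eq_zero_or_pos i with h0 | h0
        · subst h0; simp [zero_pow (hq0 _)]
        · have h1 : ¬ (i = 0) := by omega
          have h2 : ¬ (i - 1 = 0) := by omega
          simp only [h1, h2, if_false]
          rw [zero_pow (hq0 _), mul_zero]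
      · intro h; exact absurd (Finset.mem_range.mpr (by omega)) h
    rw [hR1, Finset.sum_range_succ'] at hE1
    simp only [pow_zero, one_mul, Nat.sub_zero, Nat.add_sub_add_right] at hE1
    rw [hFVx0 b] at hE1
    have hR2 : ∑ i ∈ Finset.range (m + 2),
        algebraMap R B πR ^ i *
          ((fun j => if j = 0 then b else 0) i) ^ qh ^ (m + 1 - i)
        = b ^ qh ^ (m+1) := by
      rw [Finset.sum_eq_single 0]
      · norm_num
      · intro i hi hne
        simp only [hne, if_false]
        rw [zero_pow (hq0 _), mul_zero]
      · intro h; exact absurd (Finset.mem_range.mpr (by omega)) h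
    rw [hR2] at hE2
    have hE2' : ∑ i ∈ Finset.range (m+1),
        algebraMap R B πR ^ (i+1) *
          (F (fun j => if j = 0 then b else 0) i) ^ qh ^ (m - i)
        = algebraMap R B πR * b ^ qh ^ (m+1) := by
      rw [← hE2, Finset.mul_sum]
      apply Finset.sum_congr rfl
      intro i _
      ring
    have hsum : ∑ i ∈ Finset.range (m+1),
        algebraMap R B πR ^ (i+1) * (g b (i+1)) ^ qh ^ (m - i)
        = (∑ i ∈ Finset.range (m+1),
            algebraMap R B πR ^ (i+1) *
              (F (fun j => if j = 0 then 0 else if j - 1 = 0 then b else 0) (i+1)) ^ qh ^ (m - i))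
          - ∑ i ∈ Finset.range (m+1),
            algebraMap R B πR ^ (i+1) *
              (F (fun j => if j = 0 then b else 0) i) ^ qh ^ (m - i) := by
      rw [← Finset.sum_sub_distrib]
      apply Finset.sum_congr rfl
      intro i hi
      rw [Finset.mem_range] at hi
      have hgg := hg (fun j => if j = 0 then b else 0) (i+1) (by omega)
      rw [if_neg (Nat.succ_ne_zero i)] at hgg
      simp only [Nat.add_sub_cancel] at hgg
      norm_num at hgg
      rw [← hgg, hfrob, mul_sub]
    rw [hsum]
    linear_combination hE1 - hE2'
  have main : ∀ k : ℕ, ∃ d : R, ∀ b : B, 1 ≤ k → k ≤ n →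
      g b k = algebraMap R B (πR * d) * b ^ qh ^ k := by
    intro k
    induction k using Nat.strong_induction_on with
    | _ k IH =>
      rcases k with _ | m
      · exact ⟨0, fun b h1 => absurd h1 (by omega)⟩
      by_cases hkn : m + 1 ≤ n
      swap
      · exact ⟨0, fun b _ h2 => absurd h2 hkn⟩
      have hsel : ∀ i : ℕ, ∃ dd : R, i < m → ∀ b : B,
          g b (i+1) = algebraMap R B (πR * dd) * b ^ qh ^ (i+1) := by
        intro i
        by_cases h : i < m
        · obtain ⟨d, hd⟩ := IH (i+1) (by omega)
          exact ⟨d, fun _ b => hd b (by omega) (by omega)⟩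
        · exact ⟨0, fun h' => absurd h' h⟩
      choose dd hdd using hsel
      refine ⟨-(πR ^ (qh ^ (m+1) - (m+2)) + ∑ i ∈ Finset.range m,
          πR ^ (i + 1 + qh ^ (m - i) - (m+2)) * (dd i) ^ qh ^ (m - i)), fun b _ _ => ?_⟩
      set d : R := -(πR ^ (qh ^ (m+1) - (m+2)) + ∑ i ∈ Finset.range m,
          πR ^ (i + 1 + qh ^ (m - i) - (m+2)) * (dd i) ^ qh ^ (m - i)) with hd
      have hst := hstar m hkn b
      rw [Finset.sum_range_succ] at hst
      simp only [Nat.sub_self, pow_zero, pow_one] at hst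
      have hsum : ∑ i ∈ Finset.range m,
          algebraMap R B πR ^ (i+1) * (g b (i+1)) ^ qh ^ (m - i)
          = ∑ i ∈ Finset.range m,
            algebraMap R B πR ^ (i + 1 + qh ^ (m - i)) *
              (algebraMap R B (dd i)) ^ qh ^ (m - i) * b ^ qh ^ (m+1) := by
        apply Finset.sum_congr rfl
        intro i hi
        rw [Finset.mem_range] at hi
        rw [hdd i hi b, map_mul]
        have he : qh ^ (i+1) * qh ^ (m - i) = qh ^ (m+1) := by
          rw [← pow_add]; congr 1; omega
        rw [mul_pow, mul_pow, ← pow_mul, he, pow_add]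
        ring
      rw [hsum] at hst
      have hdR : πR ^ (m+2) * d = -(πR ^ (qh ^ (m+1)) + ∑ i ∈ Finset.range m,
          πR ^ (i + 1 + qh ^ (m - i)) * dd i ^ qh ^ (m - i)) := by
        rw [hd, mul_neg, neg_inj, mul_add, Finset.mul_sum]
        congr 1
        · rw [← pow_add]; congr 1; have := hqk (m+1); omega
        · refine Finset.sum_congr rfl fun i hi => ?_
          rw [Finset.mem_range] at hi
          rw [← mul_assoc, ← pow_add]
          congr 2
          have := hqk (m - i); omega
      have hdB := congrArg (algebraMap R B) hdR
      simp only [map_mul, map_neg, map_add, map_sum, map_pow] at hdB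
      rw [mul_pow, ← Finset.sum_mul] at hst
      have key : algebraMap R B πR ^ (m+1) *
          (g b (m+1) - algebraMap R B (πR * d) * b ^ qh ^ (m+1)) = 0 := by
        rw [map_mul]
        linear_combination hst - b ^ qh ^ (m+1) * hdB
      exact sub_eq_zero.mp (htf' (m+1) _ key)
  have main' : ∀ j : ℕ, ∃ c : R, ∀ b : B, 1 ≤ j → j ≤ n →
      g b j = algebraMap R B c * b ^ qh ^ j := by
    intro j
    obtain ⟨d, hd⟩ := main j
    exact ⟨πR * d, hd⟩
  choose c hc using main'
  exact ⟨c, fun b => ⟨hg0 b, fun j h1 h2 => hc j b h1 h2⟩⟩
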